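/- Let X, Y, Z be mm-spaces. Then □_≻(X, Z) ≤ □_≻(X, Y) + □_≻(Y, Z), where □_≻ is the unilateral box metric. -/

import Mathlib

open MeasureTheory Topology Filter Set Metric ENNReal

noncomputable section

/-- The support of a Borel measure: points all of whose open neighborhoods have
positive measure. -/
def msupport {X : Type*} [TopologicalSpace X] [MeasurableSpace X] (μ : Measure X) : Set X :=
  {x | ∀ U : Set X, IsOpen U → x ∈ U → 0 < μ U}

/-- `dis_≻ S = sup { d_Y(y,y') − d_X(x,x') : (x,y),(x',y') ∈ S }`, with `dis_≻ ∅ = 0`. -/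
def disSucc {X Y : Type*} [MetricSpace X] [MetricSpace Y] (S : Set (X × Y)) : ℝ≥0∞ :=
  ⨆ p ∈ S, ⨆ q ∈ S, ENNReal.ofReal (dist p.2 q.2 - dist p.1 q.1)

/-- `dis S = sup { |d_X(x,x') − d_Y(y,y')| : (x,y),(x',y') ∈ S }`, with `dis ∅ = 0`. -/
def disBox {X Y : Type*} [MetricSpace X] [MetricSpace Y] (S : Set (X × Y)) : ℝ≥0∞ :=
  ⨆ p ∈ S, ⨆ q ∈ S, ENNReal.ofReal |dist p.1 q.1 - dist p.2 q.2|

/-- `π` is a coupling of `μ` and `ν`. -/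
def IsCoupling {X Y : Type*} [MeasurableSpace X] [MeasurableSpace Y]
    (π : Measure (X × Y)) (μ : Measure X) (ν : Measure Y) : Prop :=
  IsProbabilityMeasure π ∧ π.map Prod.fst = μ ∧ π.map Prod.snd = ν

/-- `X ≻_ε Y`: the Lipschitz order with additive error `ε`. -/
def LipDomE {X Y : Type*} [MetricSpace X] [MetricSpace Y]
    [MeasurableSpace X] [MeasurableSpace Y]
    (μ : Measure X) (ν : Measure Y) (ε : ℝ) : Prop :=
  ∃ π : Measure (X × Y), IsCoupling π μ ν ∧
    ∃ S : Set (X × Y), IsClosed S ∧ disSucc S ≤ ENNReal.ofReal ε ∧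
      ENNReal.ofReal (1 - ε) ≤ π S

/-- `X ≻ Y`: the Lipschitz order. There is a 1-Lipschitz map
`f : supp m_X → supp m_Y` with `f_* m_X = m_Y`. -/
def LipOrder {X Y : Type*} [MetricSpace X] [MetricSpace Y]
    [MeasurableSpace X] [MeasurableSpace Y]
    (μ : Measure X) (ν : Measure Y) : Prop :=
  ∃ f : msupport μ → msupport ν, LipschitzWith 1 f ∧
    ∀ A : Set Y, MeasurableSet A →
      μ (Subtype.val '' ((fun x => (f x : Y)) ⁻¹' A)) = ν A

/-- The box metric. -/
def boxDist {X Y : Type*} [MetricSpace X] [MetricSpace Y]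
    [MeasurableSpace X] [MeasurableSpace Y]
    (μ : Measure X) (ν : Measure Y) : ℝ≥0∞ :=
  ⨅ (S : Set (X × Y)) (_ : IsClosed S) (π : Measure (X × Y)) (_ : IsCoupling π μ ν),
    max (disBox S) (1 - π S)

/-- The unilateral box metric `□_≻(X,Y) = inf { ε ≥ 0 : X ≻_ε Y }`. -/
def ubox {X Y : Type*} [MetricSpace X] [MetricSpace Y]
    [MeasurableSpace X] [MeasurableSpace Y]
    (μ : Measure X) (ν : Measure Y) : ℝ :=
  sInf {ε : ℝ | 0 ≤ ε ∧ LipDomE μ ν ε}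

/-- The Prokhorov metric
`d_P(μ,ν) = inf { ε > 0 : μ(U_ε(A)) ≥ ν(A) − ε for every Borel A }`. -/
def prokDist {Y : Type*} [MetricSpace Y] [MeasurableSpace Y] (μ ν : Measure Y) : ℝ :=
  sInf {ε : ℝ | 0 < ε ∧ ∀ A : Set Y, MeasurableSet A →
    ν A ≤ μ (Metric.thickening ε A) + ENNReal.ofReal ε}

/-- `f : supp m_X → supp m_Y` is 1-Lipschitz up to an additive error `ε`. -/
def LipUpTo {X Y : Type*} [MetricSpace X] [MetricSpace Y]
    [MeasurableSpace X] [MeasurableSpace Y]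
    (μ : Measure X) (ν : Measure Y) (f : msupport μ → msupport ν) (ε : ℝ) : Prop :=
  ∃ X₀ : Set X, MeasurableSet X₀ ∧ X₀ ⊆ msupport μ ∧
    ENNReal.ofReal (1 - ε) ≤ μ X₀ ∧
    ∀ x x' : msupport μ, (x : X) ∈ X₀ → (x' : X) ∈ X₀ →
      dist (f x : Y) (f x' : Y) ≤ dist (x : X) (x' : X) + ε

/-- `X ≻^{KY}_ε Y`: there is a Borel measurable map `f : supp m_X → supp m_Y`
which is 1-Lipschitz up to `ε` and satisfies `d_P(f_* m_X, m_Y) ≤ ε`. -/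
def KYDom {X Y : Type*} [MetricSpace X] [MetricSpace Y]
    [MeasurableSpace X] [MeasurableSpace Y]
    (μ : Measure X) (ν : Measure Y) (ε : ℝ) : Prop :=
  ∃ f : msupport μ → msupport ν, Measurable f ∧ LipUpTo μ ν f ε ∧
    prokDist (Measure.map (fun x => (f x : Y)) (Measure.comap Subtype.val μ)) ν ≤ ε


open ProbabilityTheory in
/-- Gluing lemma: approximate Lipschitz domination is "transitive with error addition". -/
private lemma lipDomE_trans_aux {X Y Z : Type*} [MetricSpace X] [CompleteSpace X]
    [TopologicalSpace.SeparableSpace X] [MeasurableSpace X] [BorelSpace X]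
    [MetricSpace Y] [CompleteSpace Y] [TopologicalSpace.SeparableSpace Y]
    [MeasurableSpace Y] [BorelSpace Y]
    [MetricSpace Z] [CompleteSpace Z] [TopologicalSpace.SeparableSpace Z]
    [MeasurableSpace Z] [BorelSpace Z]
    (μ : Measure X) (ν : Measure Y) (ρ : Measure Z)
    {ε₁ ε₂ : ℝ} (hε₁ : 0 ≤ ε₁) (hε₂ : 0 ≤ ε₂)
    (h1 : LipDomE μ ν ε₁) (h2 : LipDomE ν ρ ε₂) : LipDomE μ ρ (ε₁ + ε₂) := by
  obtain ⟨π₁, ⟨hp1, hfst1, hsnd1⟩, S₁, hS₁c, hd₁, hm₁⟩ := h1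
  obtain ⟨π₂, ⟨hp2, hfst2, hsnd2⟩, S₂, hS₂c, hd₂, hm₂⟩ := h2
  haveI := hp1; haveI := hp2
  haveI : StandardBorelSpace Z := inferInstance
  haveI : Nonempty (Y × Z) := by
    by_contra h
    rw [not_nonempty_iff] at h
    have h1 : π₂ Set.univ = 1 := measure_univ
    rw [Set.univ_eq_empty_iff.mpr h, measure_empty] at h1
    exact zero_ne_one h1
  haveI : Nonempty Z := ⟨(Classical.arbitrary (Y × Z)).2⟩
  -- conditional kernel of π₂ given the first (Y) coordinate
  set κ : Kernel Y Z := π₂.condKernel with hκ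
  set κ' : Kernel (X × Y) Z := κ.comap Prod.snd measurable_snd with hκ'
  set π : Measure ((X × Y) × Z) := π₁ ⊗ₘ κ' with hπ
  have hg : Measurable (fun p : (X × Y) × Z => (p.1.1, p.2)) :=
    (measurable_fst.fst).prodMk measurable_snd
  have hg₂ : Measurable (fun p : (X × Y) × Z => (p.1.2, p.2)) :=
    (measurable_fst.snd).prodMk measurable_snd
  -- the (Y,Z)-marginal of π is π₂
  have hmap2 : π.map (fun p : (X × Y) × Z => (p.1.2, p.2)) = π₂ := by
    have hfstπ₂ : π₂.fst = ν := hfst2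
    ext A hA
    rw [Measure.map_apply hg₂ hA, hπ, Measure.compProd_apply (hg₂ hA)]
    have hint : ∀ q : X × Y, κ' q (Prod.mk q ⁻¹' ((fun p : (X × Y) × Z => (p.1.2, p.2)) ⁻¹' A))
        = κ q.2 (Prod.mk q.2 ⁻¹' A) := by
      intro q
      rw [hκ', Kernel.comap_apply]
      rfl
    simp_rw [hint]
    have hmeas : Measurable fun y : Y => κ y (Prod.mk y ⁻¹' A) :=
      Kernel.measurable_kernel_prodMk_left hA
    calc ∫⁻ q, κ q.2 (Prod.mk q.2 ⁻¹' A) ∂π₁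
        = ∫⁻ y, κ y (Prod.mk y ⁻¹' A) ∂(π₁.map Prod.snd) := by
          rw [lintegral_map hmeas measurable_snd]
      _ = ∫⁻ y, κ y (Prod.mk y ⁻¹' A) ∂(π₂.fst) := by rw [hsnd1, hfstπ₂]
      _ = (π₂.fst ⊗ₘ κ) A := (Measure.compProd_apply hA).symm
      _ = π₂ A := by rw [hκ, π₂.disintegrate π₂.condKernel]
  have hmapfst : π.map Prod.fst = π₁ := Measure.fst_compProd π₁ κ'
  haveI : IsProbabilityMeasure π := by
    constructor
    rw [← Set.preimage_univ (f := (Prod.fst : (X × Y) × Z → X × Y)),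
      ← Measure.map_apply measurable_fst MeasurableSet.univ, hmapfst]
    exact measure_univ
  -- the glued coupling on X × Z
  set π' : Measure (X × Z) := π.map (fun p : (X × Y) × Z => (p.1.1, p.2)) with hπ'
  have hcoupling : IsCoupling π' μ ρ := by
    refine ⟨Measure.isProbabilityMeasure_map hg.aemeasurable, ?_, ?_⟩
    · rw [hπ', Measure.map_map measurable_fst hg]
      have : (Prod.fst ∘ fun p : (X × Y) × Z => (p.1.1, p.2))
          = (Prod.fst ∘ (Prod.fst : (X × Y) × Z → X × Y)) := rfl
      rw [this, ← Measure.map_map measurable_fst measurable_fst, hmapfst, hfst1]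
    · rw [hπ', Measure.map_map measurable_snd hg]
      have : (Prod.snd ∘ fun p : (X × Y) × Z => (p.1.1, p.2))
          = (Prod.snd ∘ fun p : (X × Y) × Z => (p.1.2, p.2)) := rfl
      rw [this, ← Measure.map_map measurable_snd hg₂, hmap2, hsnd2]
  -- distortion bounds for points of S₁ and S₂
  have hd₁' : ∀ x y x' y', (x, y) ∈ S₁ → (x', y') ∈ S₁ →
      dist y y' - dist x x' ≤ ε₁ := by
    intro x y x' y' h h'
    have hle : ENNReal.ofReal (dist y y' - dist x x') ≤ ENNReal.ofReal ε₁ := by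
      refine le_trans ?_ hd₁
      have := le_iSup₂ (f := fun p (_ : p ∈ S₁) => ⨆ q ∈ S₁,
        ENNReal.ofReal (dist p.2 q.2 - dist p.1 q.1)) (x, y) h
      refine le_trans ?_ this
      exact le_iSup₂ (f := fun q (_ : q ∈ S₁) =>
        ENNReal.ofReal (dist y q.2 - dist x q.1)) (x', y') h'
    rcases le_or_gt (dist y y' - dist x x') 0 with h0 | h0
    · linarith
    · exact (ENNReal.ofReal_le_ofReal_iff hε₁).mp hle
  have hd₂' : ∀ y z y' z', (y, z) ∈ S₂ → (y', z') ∈ S₂ →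
      dist z z' - dist y y' ≤ ε₂ := by
    intro y z y' z' h h'
    have hle : ENNReal.ofReal (dist z z' - dist y y') ≤ ENNReal.ofReal ε₂ := by
      refine le_trans ?_ hd₂
      have := le_iSup₂ (f := fun p (_ : p ∈ S₂) => ⨆ q ∈ S₂,
        ENNReal.ofReal (dist p.2 q.2 - dist p.1 q.1)) (y, z) h
      refine le_trans ?_ this
      exact le_iSup₂ (f := fun q (_ : q ∈ S₂) =>
        ENNReal.ofReal (dist z q.2 - dist y q.1)) (y', z') h'
    rcases le_or_gt (dist z z' - dist y y') 0 with h0 | h0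
    · linarith
    · exact (ENNReal.ofReal_le_ofReal_iff hε₂).mp hle
  -- the "good" set
  set T : Set ((X × Y) × Z) := {p | p.1 ∈ S₁ ∧ (p.1.2, p.2) ∈ S₂} with hT
  set E : Set (X × Z) := (fun p : (X × Y) × Z => (p.1.1, p.2)) '' T with hE
  set S : Set (X × Z) := closure E with hS
  -- distortion bound on E, hence on its closure
  have hdistE : ∀ p ∈ E, ∀ q ∈ E, dist p.2 q.2 - dist p.1 q.1 ≤ ε₁ + ε₂ := by
    rintro _ ⟨⟨⟨x, y⟩, z⟩, ⟨h1, h2⟩, rfl⟩ _ ⟨⟨⟨x', y'⟩, z'⟩, ⟨h1', h2'⟩, rfl⟩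
    have e1 := hd₁' x y x' y' h1 h1'
    have e2 := hd₂' y z y' z' h2 h2'
    simp only at *
    linarith
  have hdistS : ∀ p ∈ S, ∀ q ∈ S, dist p.2 q.2 - dist p.1 q.1 ≤ ε₁ + ε₂ := by
    have hCclosed : IsClosed {r : (X × Z) × (X × Z) |
        dist r.1.2 r.2.2 - dist r.1.1 r.2.1 ≤ ε₁ + ε₂} :=
      isClosed_le (by fun_prop) continuous_const
    have hsub : E ×ˢ E ⊆ {r : (X × Z) × (X × Z) |
        dist r.1.2 r.2.2 - dist r.1.1 r.2.1 ≤ ε₁ + ε₂} := by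
      rintro ⟨p, q⟩ ⟨hp, hq⟩
      exact hdistE p hp q hq
    intro p hp q hq
    have : (p, q) ∈ closure (E ×ˢ E) := by
      rw [closure_prod_eq]
      exact ⟨hp, hq⟩
    exact hCclosed.closure_subset_iff.mpr hsub this
  have hdS : disSucc S ≤ ENNReal.ofReal (ε₁ + ε₂) := by
    refine iSup₂_le fun p hp => iSup₂_le fun q hq => ?_
    exact ENNReal.ofReal_le_ofReal (hdistS p hp q hq)
  -- measure bound
  have hSmeas : MeasurableSet S := isClosed_closure.measurableSet
  have hA : MeasurableSet ((Prod.fst : (X × Y) × Z → X × Y) ⁻¹' S₁) :=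
    measurable_fst hS₁c.measurableSet
  have hB : MeasurableSet ((fun p : (X × Y) × Z => (p.1.2, p.2)) ⁻¹' S₂) :=
    hg₂ hS₂c.measurableSet
  set A : Set ((X × Y) × Z) := (Prod.fst : (X × Y) × Z → X × Y) ⁻¹' S₁
  set B : Set ((X × Y) × Z) := (fun p : (X × Y) × Z => (p.1.2, p.2)) ⁻¹' S₂
  have hπA : ENNReal.ofReal (1 - ε₁) ≤ π A := by
    rw [← Measure.map_apply measurable_fst hS₁c.measurableSet, hmapfst] at *
    exact hm₁
  have hπB : ENNReal.ofReal (1 - ε₂) ≤ π B := by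
    rw [← Measure.map_apply hg₂ hS₂c.measurableSet, hmap2] at *
    exact hm₂
  have hπBc : π Bᶜ ≤ ENNReal.ofReal ε₂ := by
    rw [prob_compl_eq_one_sub hB]
    refine le_trans (tsub_le_tsub_left hπB 1) ?_
    rw [tsub_le_iff_right]
    calc (1 : ℝ≥0∞) = ENNReal.ofReal (ε₂ + (1 - ε₂)) := by norm_num
      _ ≤ ENNReal.ofReal ε₂ + ENNReal.ofReal (1 - ε₂) := ENNReal.ofReal_add_le
  have hπAB : ENNReal.ofReal (1 - (ε₁ + ε₂)) ≤ π (A ∩ B) := by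
    rcases le_or_gt (1 - (ε₁ + ε₂)) 0 with h0 | h0
    · rw [ENNReal.ofReal_eq_zero.mpr h0]; exact zero_le'
    · have key : π A ≤ π (A ∩ B) + π Bᶜ := by
        rw [← measure_inter_add_diff A hB]
        exact add_le_add_right (measure_mono (fun x hx => hx.2)) _
      have : ENNReal.ofReal (1 - (ε₁ + ε₂)) + ENNReal.ofReal ε₂ ≤ π (A ∩ B) +
          ENNReal.ofReal ε₂ := by
        calc ENNReal.ofReal (1 - (ε₁ + ε₂)) + ENNReal.ofReal ε₂
            = ENNReal.ofReal (1 - ε₁) := by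
              rw [← ENNReal.ofReal_add h0.le hε₂]; ring_nf
          _ ≤ π A := hπA
          _ ≤ π (A ∩ B) + π Bᶜ := key
          _ ≤ π (A ∩ B) + ENNReal.ofReal ε₂ := add_le_add_right hπBc _
      exact (ENNReal.add_le_add_iff_right ENNReal.ofReal_ne_top).mp this
  have hπ'S : ENNReal.ofReal (1 - (ε₁ + ε₂)) ≤ π' S := by
    rw [hπ', Measure.map_apply hg hSmeas]
    refine le_trans hπAB (measure_mono ?_)
    intro p hp
    exact subset_closure ⟨p, hp, rfl⟩
  exact ⟨π', hcoupling, S, isClosed_closure, hdS, hπ'S⟩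

private lemma lipDomE_one {X Y : Type*} [MetricSpace X]
    [MeasurableSpace X] [MetricSpace Y] [MeasurableSpace Y]
    (μ : Measure X) (ν : Measure Y)
    [IsProbabilityMeasure μ] [IsProbabilityMeasure ν] : LipDomE μ ν 1 := by
  refine ⟨μ.prod ν, ⟨inferInstance, ?_, ?_⟩, ∅, isClosed_empty, ?_, ?_⟩
  · exact Measure.fst_prod
  · exact Measure.snd_prod
  · simp [disSucc]
  · simp

/-- Triangle inequality for the unilateral box metric. -/
theorem ubox_triangle {X Y Z : Type*} [MetricSpace X] [CompleteSpace X]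
    [TopologicalSpace.SeparableSpace X] [MeasurableSpace X] [BorelSpace X]
    [MetricSpace Y] [CompleteSpace Y] [TopologicalSpace.SeparableSpace Y]
    [MeasurableSpace Y] [BorelSpace Y]
    [MetricSpace Z] [CompleteSpace Z] [TopologicalSpace.SeparableSpace Z]
    [MeasurableSpace Z] [BorelSpace Z]
    (μ : Measure X) (ν : Measure Y) (ρ : Measure Z)
    [IsProbabilityMeasure μ] [IsProbabilityMeasure ν] [IsProbabilityMeasure ρ] :
    ubox μ ρ ≤ ubox μ ν + ubox ν ρ := by
  set A : Set ℝ := {ε : ℝ | 0 ≤ ε ∧ LipDomE μ ν ε} with hA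
  set B : Set ℝ := {ε : ℝ | 0 ≤ ε ∧ LipDomE ν ρ ε} with hB
  set C : Set ℝ := {ε : ℝ | 0 ≤ ε ∧ LipDomE μ ρ ε} with hC
  have hAne : A.Nonempty := ⟨1, zero_le_one, lipDomE_one μ ν⟩
  have hBne : B.Nonempty := ⟨1, zero_le_one, lipDomE_one ν ρ⟩
  have hCbdd : BddBelow C := ⟨0, fun x hx => hx.1⟩
  refine le_of_forall_pos_le_add fun δ hδ => ?_
  obtain ⟨ε₁, hε₁A, hε₁lt⟩ := Real.lt_sInf_add_pos hAne (half_pos hδ)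
  obtain ⟨ε₂, hε₂B, hε₂lt⟩ := Real.lt_sInf_add_pos hBne (half_pos hδ)
  have hmem : ε₁ + ε₂ ∈ C :=
    ⟨add_nonneg hε₁A.1 hε₂B.1,
      lipDomE_trans_aux μ ν ρ hε₁A.1 hε₂B.1 hε₁A.2 hε₂B.2⟩
  calc ubox μ ρ ≤ ε₁ + ε₂ := csInf_le hCbdd hmem
    _ ≤ sInf A + δ / 2 + (sInf B + δ / 2) := add_le_add hε₁lt.le hε₂lt.le
    _ = ubox μ ν + ubox ν ρ + δ := by rw [ubox, ubox, ← hA, ← hB]; ring
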